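/- Let Z be a convex set and y ∈ Z. Define the weight function t_y(x) = sup{ t ∈ [0,1) : (y - t·x)/(1-t) ∈ Z }. Then the reciprocal of the weight function is convex: for all x₁, x₂ ∈ Z with t_y(x₁) > 0 and t_y(x₂) > 0, and all s ∈ [0,1], one has 1/t_y(s·x₁ + (1-s)·x₂) ≤ s/t_y(x₁) + (1-s)/t_y(x₂). -/

import Mathlib

/-- The weight function `t_y(x) = sup{ t ∈ [0,1) : (y - t·x)/(1-t) ∈ Z }`
(with `sSup ∅ = 0` by the real-number convention). -/
noncomputable def weight {V : Type*} [AddCommGroup V] [Module ℝ V] (Z : Set V) (y x : V) : ℝ :=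
  sSup {t : ℝ | 0 ≤ t ∧ t < 1 ∧ (1 - t)⁻¹ • (y - t • x) ∈ Z}

theorem reciprocal_weight_convex {V : Type*} [AddCommGroup V] [Module ℝ V]
    (Z : Set V) (hZ : Convex ℝ Z) (y : V) (hy : y ∈ Z)
    (x₁ x₂ : V) (hx₁ : x₁ ∈ Z) (hx₂ : x₂ ∈ Z)
    (ht₁ : 0 < weight Z y x₁) (ht₂ : 0 < weight Z y x₂)
    (s : ℝ) (hs0 : 0 ≤ s) (hs1 : s ≤ 1) :
    1 / weight Z y (s • x₁ + (1 - s) • x₂) ≤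
      s / weight Z y x₁ + (1 - s) / weight Z y x₂ := by
  set x := s • x₁ + (1 - s) • x₂ with hxdef
  set S : V → Set ℝ := fun v => {t : ℝ | 0 ≤ t ∧ t < 1 ∧ (1 - t)⁻¹ • (y - t • v) ∈ Z} with hS
  have hbdd : ∀ v, BddAbove (S v) := fun v => ⟨1, fun u hu => hu.2.1.le⟩
  have hne : ∀ v, 0 < weight Z y v → (S v).Nonempty := by
    intro v hv
    by_contra h
    rw [Set.not_nonempty_iff_eq_empty] at h
    simp only [weight, hS] at hv h
    rw [h, Real.sSup_empty] at hv
    exact lt_irrefl _ hv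
  have key : ∀ t₁ ∈ S x₁, ∀ t₂ ∈ S x₂, 0 < t₁ → 0 < t₂ →
      1 / weight Z y x ≤ s / t₁ + (1 - s) / t₂ := by
    intro t₁ h₁ t₂ h₂ hp₁ hp₂
    obtain ⟨h₁0, h₁1, hz₁⟩ := h₁
    obtain ⟨h₂0, h₂1, hz₂⟩ := h₂
    have h₁1' : (0:ℝ) < 1 - t₁ := by linarith
    have h₂1' : (0:ℝ) < 1 - t₂ := by linarith
    have hDpos : 0 < s * t₂ + (1 - s) * t₁ := by
      have hm := lt_min hp₂ hp₁
      nlinarith [mul_nonneg hs0 (sub_nonneg.2 (min_le_left t₂ t₁)),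
        mul_nonneg (sub_nonneg.2 hs1) (sub_nonneg.2 (min_le_right t₂ t₁))]
    have hEpos : 0 < s * t₂ + (1 - s) * t₁ - t₁ * t₂ := by
      have hm := lt_min (mul_pos hp₂ h₁1') (mul_pos hp₁ h₂1')
      nlinarith [mul_nonneg hs0 (sub_nonneg.2 (min_le_left (t₂*(1-t₁)) (t₁*(1-t₂)))),
        mul_nonneg (sub_nonneg.2 hs1) (sub_nonneg.2 (min_le_right (t₂*(1-t₁)) (t₁*(1-t₂))))]
    have htpos : 0 < t₁ * t₂ / (s * t₂ + (1 - s) * t₁) :=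
      div_pos (mul_pos hp₁ hp₂) hDpos
    have h1t : 1 - t₁ * t₂ / (s * t₂ + (1 - s) * t₁)
        = (s * t₂ + (1 - s) * t₁ - t₁ * t₂) / (s * t₂ + (1 - s) * t₁) := by
      rw [eq_div_iff hDpos.ne', sub_mul, div_mul_cancel₀ _ hDpos.ne', one_mul]
    have h1tpos : (0:ℝ) < 1 - t₁ * t₂ / (s * t₂ + (1 - s) * t₁) := by
      rw [h1t]; exact div_pos hEpos hDpos
    have htlt : t₁ * t₂ / (s * t₂ + (1 - s) * t₁) < 1 := by linarith
    have hden : (0:ℝ) < (s * t₂ + (1 - s) * t₁) * (1 - t₁ * t₂ / (s * t₂ + (1 - s) * t₁)) :=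
      mul_pos hDpos h1tpos
    have hmem : t₁ * t₂ / (s * t₂ + (1 - s) * t₁) ∈ S x := by
      refine ⟨htpos.le, htlt, ?_⟩
      have ha : (0:ℝ) ≤ s * t₂ * (1 - t₁) / ((s * t₂ + (1 - s) * t₁) * (1 - t₁ * t₂ / (s * t₂ + (1 - s) * t₁))) :=
        div_nonneg (mul_nonneg (mul_nonneg hs0 hp₂.le) h₁1'.le) hden.le
      have hb : (0:ℝ) ≤ (1 - s) * t₁ * (1 - t₂) / ((s * t₂ + (1 - s) * t₁) * (1 - t₁ * t₂ / (s * t₂ + (1 - s) * t₁))) :=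
        div_nonneg (mul_nonneg (mul_nonneg (by linarith) hp₁.le) h₂1'.le) hden.le
      have hab : s * t₂ * (1 - t₁) / ((s * t₂ + (1 - s) * t₁) * (1 - t₁ * t₂ / (s * t₂ + (1 - s) * t₁)))
          + (1 - s) * t₁ * (1 - t₂) / ((s * t₂ + (1 - s) * t₁) * (1 - t₁ * t₂ / (s * t₂ + (1 - s) * t₁))) = 1 := by
        rw [← add_div, div_eq_one_iff_eq hden.ne']
        rw [h1t]
        rw [mul_div_assoc', mul_div_cancel_left₀ _ hDpos.ne']
        ring
      have hmem' := hZ hz₁ hz₂ ha hb hab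
      have hveq : (1 - t₁ * t₂ / (s * t₂ + (1 - s) * t₁))⁻¹ • (y - (t₁ * t₂ / (s * t₂ + (1 - s) * t₁)) • x)
          = (s * t₂ * (1 - t₁) / ((s * t₂ + (1 - s) * t₁) * (1 - t₁ * t₂ / (s * t₂ + (1 - s) * t₁)))) • ((1 - t₁)⁻¹ • (y - t₁ • x₁))
          + ((1 - s) * t₁ * (1 - t₂) / ((s * t₂ + (1 - s) * t₁) * (1 - t₁ * t₂ / (s * t₂ + (1 - s) * t₁)))) • ((1 - t₂)⁻¹ • (y - t₂ • x₂)) := by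
        rw [hxdef, h1t]
        match_scalars
        · field_simp
        · field_simp
        · field_simp
      rw [hveq]
      exact hmem'
    have hw : t₁ * t₂ / (s * t₂ + (1 - s) * t₁) ≤ weight Z y x := le_csSup (hbdd x) hmem
    have hle : 1 / weight Z y x ≤ 1 / (t₁ * t₂ / (s * t₂ + (1 - s) * t₁)) :=
      one_div_le_one_div_of_le htpos hw
    refine hle.trans (le_of_eq ?_)
    rw [one_div_div]
    field_simp
  set w₁ := weight Z y x₁
  set w₂ := weight Z y x₂
  have hf : Filter.Tendsto (fun ε : ℝ => s / (w₁ - ε) + (1 - s) / (w₂ - ε)) (nhdsWithin 0 (Set.Ioi 0))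
      (nhds (s / w₁ + (1 - s) / w₂)) := by
    have h1 : Filter.Tendsto (fun ε : ℝ => ε) (nhdsWithin 0 (Set.Ioi 0)) (nhds 0) :=
      Filter.tendsto_id.mono_left nhdsWithin_le_nhds
    have h2 := (Filter.Tendsto.div (tendsto_const_nhds (x := s))
      ((tendsto_const_nhds (x := w₁)).sub h1) (by simpa using ht₁.ne')).add
      (Filter.Tendsto.div (tendsto_const_nhds (x := (1 - s)))
      ((tendsto_const_nhds (x := w₂)).sub h1) (by simpa using ht₂.ne'))
    simpa using h2
  refine ge_of_tendsto hf ?_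
  have hev : ∀ᶠ ε : ℝ in nhdsWithin 0 (Set.Ioi 0), ε < min w₁ w₂ :=
    eventually_nhdsWithin_of_eventually_nhds (gt_mem_nhds (lt_min ht₁ ht₂))
  filter_upwards [hev, self_mem_nhdsWithin] with ε hεlt hεpos
  have hε0 : (0:ℝ) < ε := hεpos
  have h1 : 0 < w₁ - ε := by
    have := lt_min_iff.mp hεlt
    linarith [this.1]
  have h2 : 0 < w₂ - ε := by
    have := lt_min_iff.mp hεlt
    linarith [this.2]
  obtain ⟨t₁, ht₁m, ht₁gt⟩ := exists_lt_of_lt_csSup (hne x₁ ht₁) (show w₁ - ε < w₁ by linarith)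
  obtain ⟨t₂, ht₂m, ht₂gt⟩ := exists_lt_of_lt_csSup (hne x₂ ht₂) (show w₂ - ε < w₂ by linarith)
  have hp₁ : 0 < t₁ := lt_trans h1 ht₁gt
  have hp₂ : 0 < t₂ := lt_trans h2 ht₂gt
  calc 1 / weight Z y x ≤ s / t₁ + (1 - s) / t₂ := key t₁ ht₁m t₂ ht₂m hp₁ hp₂
    _ ≤ s / (w₁ - ε) + (1 - s) / (w₂ - ε) := by
        exact add_le_add (div_le_div_of_nonneg_left hs0 h1 ht₁gt.le)
          (div_le_div_of_nonneg_left (by linarith) h2 ht₂gt.le)
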